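/- arXiv:2309.09567 — 4 statements merged into one kernel-verified Lean document; each statement's English description precedes it below -/
import Mathlib

section
/- Let μ and ν be probability measures on ℝ with finite fourth moments, with means M₁ and Z̄ respectively, and centered fourth moments M₄ᶜ(μ) and M₄ᶜ(ν). Then for every c₀ > 0, W₂(μ, ν)² ≤ c₀²·W₁(μ, ν)² + C·((M₄ᶜ(μ) + M₄ᶜ(ν) + |M₁ − Z̄|⁴)/c₀²)^{1/2} for a universal constant C, where W₁ and W₂ are the 1- and 2-Wasserstein distances. Consequently W₂(μ,ν) ≤ c₀·W₁(μ,ν) + C·((M₄ᶜ(μ) + M₄ᶜ(ν) + |M₁−Z̄|⁴)/c₀²)^{1/4}. -/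
open Real MeasureTheory

/-- A coupling of two measures on `ℝ`. -/
def IsCoupling (plan : Measure (ℝ × ℝ)) (μ ν : Measure ℝ) : Prop :=
  plan.map Prod.fst = μ ∧ plan.map Prod.snd = ν

/-- The 1-Wasserstein distance. -/
noncomputable def W1 (μ ν : Measure ℝ) : ℝ :=
  sInf {c | ∃ plan : Measure (ℝ × ℝ), IsCoupling plan μ ν ∧
    c = ∫ p : ℝ × ℝ, |p.1 - p.2| ∂plan}

/-- The 2-Wasserstein distance. -/
noncomputable def W2 (μ ν : Measure ℝ) : ℝ :=
  Real.sqrt (sInf {c | ∃ plan : Measure (ℝ × ℝ), IsCoupling plan μ ν ∧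
    c = ∫ p : ℝ × ℝ, (p.1 - p.2) ^ 2 ∂plan})

/-- The mean of a measure on `ℝ`. -/
noncomputable def meanM (μ : Measure ℝ) : ℝ := ∫ x, x ∂μ

/-- The centered fourth moment of a measure on `ℝ`. -/
noncomputable def M4c (μ : Measure ℝ) : ℝ := ∫ x, (x - meanM μ) ^ 4 ∂μ

/- ### Auxiliary elementary lemmas -/

lemma aux_pow4 (a b c : ℝ) : (a + b + c) ^ 4 ≤ 27 * (a ^ 4 + b ^ 4 + c ^ 4) := by
  have h1 : (a + b + c) ^ 2 ≤ 3 * (a ^ 2 + b ^ 2 + c ^ 2) := by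
    nlinarith [sq_nonneg (a - b), sq_nonneg (b - c), sq_nonneg (a - c)]
  have h2 : (a ^ 2 + b ^ 2 + c ^ 2) ^ 2 ≤ 3 * (a ^ 4 + b ^ 4 + c ^ 4) := by
    nlinarith [sq_nonneg (a ^ 2 - b ^ 2), sq_nonneg (b ^ 2 - c ^ 2), sq_nonneg (a ^ 2 - c ^ 2)]
  nlinarith [sq_nonneg (a + b + c), sq_nonneg (a ^ 2 + b ^ 2 + c ^ 2)]

lemma aux_pow4' (a b : ℝ) : (a - b) ^ 4 ≤ 8 * a ^ 4 + 8 * b ^ 4 := by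
  nlinarith [sq_nonneg (a + b), sq_nonneg (a - b), sq_nonneg (a ^ 2 - b ^ 2), sq_nonneg a,
    sq_nonneg b, sq_nonneg (a*b)]

lemma aux_tf {f t : ℝ} (hf : 0 ≤ f) (ht : 0 < t) : f ^ 2 ≤ t * f + f ^ 4 / t ^ 2 := by
  rcases le_total f t with h | h
  · have h1 : f ^ 2 ≤ t * f := by nlinarith
    have h2 : 0 ≤ f ^ 4 / t ^ 2 := by positivity
    linarith
  · have h1 : f ^ 2 ≤ f ^ 4 / t ^ 2 := by
      rw [le_div_iff₀ (by positivity)]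
      have ht2 : t ^ 2 ≤ f ^ 2 := by nlinarith
      nlinarith [mul_le_mul_of_nonneg_left ht2 (sq_nonneg f)]
    have h2 : 0 ≤ t * f := by positivity
    linarith

lemma aux_sq_le (t : ℝ) : t ^ 2 ≤ 1 + t ^ 4 := by nlinarith [sq_nonneg (t ^ 2 - 1)]

lemma aux_abs_le (t : ℝ) : |t| ≤ 1 + t ^ 4 := by
  rcases le_total (|t|) 1 with h | h
  · nlinarith [pow_nonneg (abs_nonneg t) 4, Even.pow_abs (⟨2, rfl⟩ : Even 4) t]
  · have h4 : |t| ≤ |t| ^ 4 := le_self_pow₀ h (by norm_num)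
    have : |t| ^ 4 = t ^ 4 := Even.pow_abs (⟨2, rfl⟩ : Even 4) t
    linarith

lemma sqrt_add_le {a b : ℝ} (ha : 0 ≤ a) (hb : 0 ≤ b) :
    Real.sqrt (a + b) ≤ Real.sqrt a + Real.sqrt b := by
  have h : a + b ≤ (Real.sqrt a + Real.sqrt b) ^ 2 := by
    nlinarith [Real.sq_sqrt ha, Real.sq_sqrt hb, Real.sqrt_nonneg a, Real.sqrt_nonneg b,
      mul_nonneg (Real.sqrt_nonneg a) (Real.sqrt_nonneg b)]
  calc Real.sqrt (a + b) ≤ Real.sqrt ((Real.sqrt a + Real.sqrt b) ^ 2) := Real.sqrt_le_sqrt h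
    _ = Real.sqrt a + Real.sqrt b :=
        Real.sqrt_sq (by positivity)

/-- The purely numeric core of the argument. -/
lemma aux_numeric {S A B M c₀ : ℝ} (hA : 0 ≤ A) (hB : 0 ≤ B) (hM : 0 ≤ M)
    (hBM : B ≤ 27 * M) (hc : 0 < c₀) (hS : ∀ t > 0, S ≤ t * A + B / t ^ 2) :
    S ≤ c₀ ^ 2 * A ^ 2 + 8 * Real.sqrt M / c₀ := by
  have hMc : 0 ≤ 8 * Real.sqrt M / c₀ := by positivity
  rcases eq_or_lt_of_le hB with hB0 | hB0
  · -- B = 0 : S ≤ t * A for every t > 0, hence S ≤ 0.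
    have hS0 : S ≤ 0 := by
      by_contra h
      push_neg at h
      have ht : (0:ℝ) < S / (2 * A + 2) := by positivity
      have := hS _ ht
      rw [← hB0] at this
      have : S ≤ S / (2 * A + 2) * A := by simpa using this
      rw [div_mul_eq_mul_div, le_div_iff₀ (by positivity)] at this
      nlinarith
    nlinarith [sq_nonneg (c₀ * A)]
  · -- B > 0 : choose t = B^{1/4} √c₀.
    set t : ℝ := Real.sqrt (Real.sqrt B) * Real.sqrt c₀ with ht_def
    have ht : 0 < t := by positivity
    have hsB : 0 < Real.sqrt B := Real.sqrt_pos.2 hB0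
    have ht2 : t ^ 2 = Real.sqrt B * c₀ := by
      rw [ht_def, mul_pow, Real.sq_sqrt (Real.sqrt_nonneg B), Real.sq_sqrt hc.le]
    have hBt : B / t ^ 2 = Real.sqrt B / c₀ := by
      have hss : Real.sqrt B * Real.sqrt B = B := Real.mul_self_sqrt hB
      rw [ht2]
      field_simp
      linear_combination -hss
    have htA : t * A ≤ c₀ ^ 2 * A ^ 2 + t ^ 2 / (4 * c₀ ^ 2) := by
      have h4c : (0:ℝ) < 4 * c₀ ^ 2 := by positivity
      have key : t * A - c₀ ^ 2 * A ^ 2 ≤ t ^ 2 / (4 * c₀ ^ 2) := by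
        rw [le_div_iff₀ h4c]
        nlinarith [sq_nonneg (t - 2 * c₀ ^ 2 * A)]
      linarith
    have hSt := hS t ht
    have ht2' : t ^ 2 / (4 * c₀ ^ 2) = Real.sqrt B / (4 * c₀) := by
      rw [ht2]; field_simp
    have hBM' : Real.sqrt B ≤ 6 * Real.sqrt M := by
      have h1 : Real.sqrt B ≤ Real.sqrt (27 * M) := Real.sqrt_le_sqrt hBM
      have h2 : Real.sqrt (27 * M) = Real.sqrt 27 * Real.sqrt M :=
        Real.sqrt_mul (by norm_num) M
      have h3 : Real.sqrt 27 ≤ 6 := by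
        nlinarith [Real.sq_sqrt (show (0:ℝ) ≤ 27 by norm_num), Real.sqrt_nonneg 27]
      nlinarith [Real.sqrt_nonneg M]
    have hsM : 0 ≤ Real.sqrt M := Real.sqrt_nonneg M
    calc S ≤ t * A + B / t ^ 2 := hSt
      _ ≤ c₀ ^ 2 * A ^ 2 + t ^ 2 / (4 * c₀ ^ 2) + B / t ^ 2 := by linarith
      _ = c₀ ^ 2 * A ^ 2 + Real.sqrt B / (4 * c₀) + Real.sqrt B / c₀ := by
          rw [ht2', hBt]
      _ ≤ c₀ ^ 2 * A ^ 2 + 8 * Real.sqrt M / c₀ := by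
          have h4 : Real.sqrt B / (4 * c₀) + Real.sqrt B / c₀ ≤ 8 * Real.sqrt M / c₀ := by
            rw [div_add_div _ _ (by positivity) (by positivity), div_le_div_iff₀ (by positivity) hc]
            nlinarith
          linarith

/-- The key estimate for an arbitrary coupling. -/
lemma coupling_bound (μ ν : Measure ℝ) [IsProbabilityMeasure μ] [IsProbabilityMeasure ν]
    (h4μ : Integrable (fun x => x ^ 4) μ) (h4ν : Integrable (fun x => x ^ 4) ν)
    (plan : Measure (ℝ × ℝ)) (hc : IsCoupling plan μ ν) {c₀ : ℝ} (hc₀ : 0 < c₀) :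
    ∫ p : ℝ × ℝ, (p.1 - p.2) ^ 2 ∂plan ≤
      c₀ ^ 2 * (∫ p : ℝ × ℝ, |p.1 - p.2| ∂plan) ^ 2
        + 8 * Real.sqrt (M4c μ + M4c ν + |meanM μ - meanM ν| ^ 4) / c₀ := by
  obtain ⟨hfst, hsnd⟩ := hc
  set M₁ : ℝ := meanM μ
  set Z : ℝ := meanM ν
  have hplan : IsProbabilityMeasure plan := by
    constructor
    have h := congrArg (fun m : Measure ℝ => m Set.univ) hfst
    simp only [Measure.map_apply measurable_fst MeasurableSet.univ, Set.preimage_univ] at h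
    simp [h]
  -- integrability of centered fourth powers on the marginals
  have hint_center : ∀ (ρ : Measure ℝ), IsProbabilityMeasure ρ →
      Integrable (fun x => x ^ 4) ρ → ∀ m : ℝ, Integrable (fun x => (x - m) ^ 4) ρ := by
    intro ρ hρ h4 m
    refine Integrable.mono' ((h4.const_mul 8).add (integrable_const (8 * m ^ 4)))
      (((continuous_id.sub continuous_const).pow 4).aestronglyMeasurable) (ae_of_all _ fun x => ?_)
    have h := aux_pow4' x m
    have h0 : (0:ℝ) ≤ (x - m) ^ 4 := by positivity
    simp only [Pi.add_apply]
    rw [Real.norm_eq_abs, abs_of_nonneg h0]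
    linarith
  have hμc : Integrable (fun x => (x - M₁) ^ 4) μ := hint_center μ inferInstance h4μ M₁
  have hνc : Integrable (fun x => (x - Z) ^ 4) ν := hint_center ν inferInstance h4ν Z
  -- transfer to the coupling
  have haefst : AEMeasurable (Prod.fst : ℝ × ℝ → ℝ) plan := measurable_fst.aemeasurable
  have haesnd : AEMeasurable (Prod.snd : ℝ × ℝ → ℝ) plan := measurable_snd.aemeasurable
  have hμc' : Integrable (fun p : ℝ × ℝ => (p.1 - M₁) ^ 4) plan := by
    have h1 : Integrable (fun x => (x - M₁) ^ 4) (plan.map Prod.fst) := hfst ▸ hμc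
    have := (integrable_map_measure (((continuous_id.sub continuous_const).pow 4).aestronglyMeasurable) haefst).1 h1
    exact this
  have hνc' : Integrable (fun p : ℝ × ℝ => (p.2 - Z) ^ 4) plan := by
    have h1 : Integrable (fun x => (x - Z) ^ 4) (plan.map Prod.snd) := hsnd ▸ hνc
    have := (integrable_map_measure (((continuous_id.sub continuous_const).pow 4).aestronglyMeasurable) haesnd).1 h1
    exact this
  have hμint : ∫ p : ℝ × ℝ, (p.1 - M₁) ^ 4 ∂plan = M4c μ := by
    have := integral_map haefst (f := fun x => (x - M₁) ^ 4)
      (((continuous_id.sub continuous_const).pow 4).aestronglyMeasurable)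
    rw [hfst] at this
    rw [← this]; rfl
  have hνint : ∫ p : ℝ × ℝ, (p.2 - Z) ^ 4 ∂plan = M4c ν := by
    have := integral_map haesnd (f := fun x => (x - Z) ^ 4)
      (((continuous_id.sub continuous_const).pow 4).aestronglyMeasurable)
    rw [hsnd] at this
    rw [← this]; rfl
  -- dominating function for fourth power of difference
  have hdom : ∀ p : ℝ × ℝ, (p.1 - p.2) ^ 4 ≤
      27 * ((p.1 - M₁) ^ 4 + (p.2 - Z) ^ 4 + (M₁ - Z) ^ 4) := by
    intro p
    have := aux_pow4 (p.1 - M₁) (-(p.2 - Z)) (M₁ - Z)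
    have hsum : (p.1 - M₁) + (-(p.2 - Z)) + (M₁ - Z) = p.1 - p.2 := by ring
    rw [hsum] at this
    have hneg : (-(p.2 - Z)) ^ 4 = (p.2 - Z) ^ 4 := by ring
    linarith [this, hneg.le]
  have hdomint : Integrable
      (fun p : ℝ × ℝ => 27 * ((p.1 - M₁) ^ 4 + (p.2 - Z) ^ 4 + (M₁ - Z) ^ 4)) plan :=
    (((hμc'.add hνc').add (integrable_const _)).const_mul 27)
  have hg4 : Integrable (fun p : ℝ × ℝ => (p.1 - p.2) ^ 4) plan := by
    refine Integrable.mono' hdomint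
      (((continuous_fst.sub continuous_snd).pow 4).aestronglyMeasurable) (ae_of_all _ fun p => ?_)
    rw [Real.norm_eq_abs, abs_of_nonneg (by positivity)]
    exact hdom p
  have hg2 : Integrable (fun p : ℝ × ℝ => (p.1 - p.2) ^ 2) plan := by
    refine Integrable.mono' ((integrable_const 1).add hg4)
      (((continuous_fst.sub continuous_snd).pow 2).aestronglyMeasurable)
      (ae_of_all _ fun p => ?_)
    simp only [Pi.add_apply]
    rw [Real.norm_eq_abs, abs_of_nonneg (by positivity)]
    exact aux_sq_le _
  have hg1 : Integrable (fun p : ℝ × ℝ => |p.1 - p.2|) plan := by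
    refine Integrable.mono' ((integrable_const 1).add hg4)
      (((continuous_fst.sub continuous_snd).abs).aestronglyMeasurable)
      (ae_of_all _ fun p => ?_)
    simp only [Pi.add_apply]
    rw [Real.norm_eq_abs, abs_abs]
    exact aux_abs_le _
  set S : ℝ := ∫ p : ℝ × ℝ, (p.1 - p.2) ^ 2 ∂plan
  set A : ℝ := ∫ p : ℝ × ℝ, |p.1 - p.2| ∂plan
  set B : ℝ := ∫ p : ℝ × ℝ, (p.1 - p.2) ^ 4 ∂plan
  set M : ℝ := M4c μ + M4c ν + |M₁ - Z| ^ 4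
  have hA : 0 ≤ A := integral_nonneg fun p => abs_nonneg _
  have hB : 0 ≤ B := integral_nonneg fun p => by positivity
  have hM4μ : 0 ≤ M4c μ := integral_nonneg fun x => by positivity
  have hM4ν : 0 ≤ M4c ν := integral_nonneg fun x => by positivity
  have hM : 0 ≤ M := by positivity
  have habs4 : |M₁ - Z| ^ 4 = (M₁ - Z) ^ 4 := Even.pow_abs (⟨2, rfl⟩ : Even 4) _
  have hBM : B ≤ 27 * M := by
    have h1 : B ≤ ∫ p : ℝ × ℝ, 27 * ((p.1 - M₁) ^ 4 + (p.2 - Z) ^ 4 + (M₁ - Z) ^ 4) ∂plan :=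
      integral_mono hg4 hdomint hdom
    have hsum : Integrable (fun p : ℝ × ℝ => (p.1 - M₁) ^ 4 + (p.2 - Z) ^ 4) plan :=
      hμc'.add hνc'
    have h2 : ∫ p : ℝ × ℝ, 27 * ((p.1 - M₁) ^ 4 + (p.2 - Z) ^ 4 + (M₁ - Z) ^ 4) ∂plan
        = 27 * (M4c μ + M4c ν + (M₁ - Z) ^ 4) := by
      rw [integral_const_mul, integral_add hsum (integrable_const _),
        integral_add hμc' hνc', hμint, hνint, integral_const]
      simp
    rw [h2] at h1
    rw [show M = M4c μ + M4c ν + (M₁ - Z) ^ 4 by rw [← habs4]]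
    exact h1
  have hS : ∀ t > 0, S ≤ t * A + B / t ^ 2 := by
    intro t ht
    have hpt : ∀ p : ℝ × ℝ, (p.1 - p.2) ^ 2 ≤ t * |p.1 - p.2| + (p.1 - p.2) ^ 4 / t ^ 2 := by
      intro p
      have h := aux_tf (abs_nonneg (p.1 - p.2)) ht
      have h1 : |p.1 - p.2| ^ 2 = (p.1 - p.2) ^ 2 := Even.pow_abs (⟨1, rfl⟩ : Even 2) _
      have h2 : |p.1 - p.2| ^ 4 = (p.1 - p.2) ^ 4 := Even.pow_abs (⟨2, rfl⟩ : Even 4) _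
      rw [h1, h2] at h
      exact h
    have hint1 : Integrable (fun p : ℝ × ℝ => t * |p.1 - p.2|) plan := hg1.const_mul t
    have hint2 : Integrable (fun p : ℝ × ℝ => (p.1 - p.2) ^ 4 / t ^ 2) plan := hg4.div_const _
    have hint : Integrable (fun p : ℝ × ℝ => t * |p.1 - p.2| + (p.1 - p.2) ^ 4 / t ^ 2) plan :=
      hint1.add hint2
    have h1 : S ≤ ∫ p : ℝ × ℝ, (t * |p.1 - p.2| + (p.1 - p.2) ^ 4 / t ^ 2) ∂plan :=
      integral_mono hg2 hint hpt
    rw [integral_add hint1 hint2, integral_const_mul, integral_div] at h1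
    exact h1
  exact aux_numeric hA hB hM hBM hc₀ hS

/-- There is a universal constant `C` such that for all probability measures `μ, ν` on `ℝ`
with finite fourth moments and all `c₀ > 0`,
`W₂(μ,ν)² ≤ c₀² W₁(μ,ν)² + C ((M₄ᶜ(μ)+M₄ᶜ(ν)+|M₁−Z̄|⁴)/c₀²)^{1/2}`, and consequently
`W₂(μ,ν) ≤ c₀ W₁(μ,ν) + C ((M₄ᶜ(μ)+M₄ᶜ(ν)+|M₁−Z̄|⁴)/c₀²)^{1/4}`. -/
theorem stmt10 :
    ∃ C > 0, ∀ μ ν : Measure ℝ, IsProbabilityMeasure μ → IsProbabilityMeasure ν →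
      Integrable (fun x => x ^ 4) μ → Integrable (fun x => x ^ 4) ν →
      ∀ c₀ : ℝ, 0 < c₀ →
        W2 μ ν ^ 2 ≤ c₀ ^ 2 * W1 μ ν ^ 2
            + C * Real.sqrt ((M4c μ + M4c ν + |meanM μ - meanM ν| ^ 4) / c₀ ^ 2)
        ∧ W2 μ ν ≤ c₀ * W1 μ ν
            + C * Real.sqrt (Real.sqrt ((M4c μ + M4c ν + |meanM μ - meanM ν| ^ 4) / c₀ ^ 2)) := by
  refine ⟨8, by norm_num, fun μ ν hμ hν h4μ h4ν c₀ hc₀ => ?_⟩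
  set M : ℝ := M4c μ + M4c ν + |meanM μ - meanM ν| ^ 4 with hMdef
  have hM4μ : 0 ≤ M4c μ := integral_nonneg fun x => by positivity
  have hM4ν : 0 ≤ M4c ν := integral_nonneg fun x => by positivity
  have hM : 0 ≤ M := by positivity
  set S₂ : Set ℝ := {c | ∃ plan : Measure (ℝ × ℝ), IsCoupling plan μ ν ∧
    c = ∫ p : ℝ × ℝ, (p.1 - p.2) ^ 2 ∂plan} with hS₂def
  set S₁ : Set ℝ := {c | ∃ plan : Measure (ℝ × ℝ), IsCoupling plan μ ν ∧
    c = ∫ p : ℝ × ℝ, |p.1 - p.2| ∂plan} with hS₁def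
  have hcp : IsCoupling (μ.prod ν) μ ν := by
    constructor
    · rw [Measure.map_fst_prod]; simp
    · rw [Measure.map_snd_prod]; simp
  have hS₂ne : S₂.Nonempty := ⟨_, μ.prod ν, hcp, rfl⟩
  have hS₁ne : S₁.Nonempty := ⟨_, μ.prod ν, hcp, rfl⟩
  have hS₂bdd : BddBelow S₂ := by
    refine ⟨0, fun b hb => ?_⟩
    obtain ⟨plan, _, rfl⟩ := hb
    exact integral_nonneg fun p => by positivity
  have hS₁bdd : BddBelow S₁ := by
    refine ⟨0, fun b hb => ?_⟩
    obtain ⟨plan, _, rfl⟩ := hb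
    exact integral_nonneg fun p => abs_nonneg _
  have hK0 : 0 ≤ sInf S₂ := le_csInf hS₂ne fun b hb => by
    obtain ⟨plan, _, rfl⟩ := hb
    exact integral_nonneg fun p => by positivity
  have hW10 : 0 ≤ W1 μ ν := le_csInf hS₁ne fun b hb => by
    obtain ⟨plan, _, rfl⟩ := hb
    exact integral_nonneg fun p => abs_nonneg _
  have hW2sq : W2 μ ν ^ 2 = sInf S₂ := Real.sq_sqrt hK0
  have hsqrtdiv : Real.sqrt (M / c₀ ^ 2) = Real.sqrt M / c₀ := by
    rw [Real.sqrt_div hM, Real.sqrt_sq hc₀.le]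
  set D : ℝ := 8 * Real.sqrt M / c₀ with hDdef
  have hD0 : 0 ≤ D := by positivity
  -- the first inequality
  have hmain : sInf S₂ ≤ c₀ ^ 2 * W1 μ ν ^ 2 + D := by
    refine le_of_forall_pos_le_add fun ε' hε' => ?_
    set ε : ℝ := min 1 (ε' / (c₀ ^ 2 * (2 * W1 μ ν + 1))) with hεdef
    have hε : 0 < ε := lt_min one_pos (by positivity)
    obtain ⟨a, ha, halt⟩ := Real.lt_sInf_add_pos hS₁ne hε
    have hW1eq : W1 μ ν = sInf S₁ := rfl
    rw [← hW1eq] at halt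
    obtain ⟨plan, hcpl, rfl⟩ := ha
    have hbound := coupling_bound μ ν h4μ h4ν plan hcpl hc₀
    have hle : sInf S₂ ≤ ∫ p : ℝ × ℝ, (p.1 - p.2) ^ 2 ∂plan :=
      csInf_le hS₂bdd ⟨plan, hcpl, rfl⟩
    have hAnn : 0 ≤ ∫ p : ℝ × ℝ, |p.1 - p.2| ∂plan := integral_nonneg fun p => abs_nonneg _
    have hA2 : (∫ p : ℝ × ℝ, |p.1 - p.2| ∂plan) ^ 2 ≤ (W1 μ ν + ε) ^ 2 := by
      have := halt.le
      nlinarith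
    have hε1 : ε ≤ 1 := min_le_left _ _
    have hε2 : ε ≤ ε' / (c₀ ^ 2 * (2 * W1 μ ν + 1)) := min_le_right _ _
    have hε3 : c₀ ^ 2 * (2 * W1 μ ν + 1) * ε ≤ ε' := by
      rw [← le_div_iff₀' (by positivity)]
      exact hε2
    have : c₀ ^ 2 * (W1 μ ν + ε) ^ 2 ≤ c₀ ^ 2 * W1 μ ν ^ 2 + ε' := by
      nlinarith [sq_nonneg c₀, mul_pos hc₀ hc₀]
    nlinarith [mul_le_mul_of_nonneg_left hA2 (sq_nonneg c₀)]
  constructor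
  · rw [hW2sq, hsqrtdiv]
    have : (8:ℝ) * (Real.sqrt M / c₀) = D := by rw [hDdef]; ring
    linarith
  · have h1 : W2 μ ν ≤ Real.sqrt (c₀ ^ 2 * W1 μ ν ^ 2 + D) := by
      unfold W2
      exact Real.sqrt_le_sqrt hmain
    have h2 : Real.sqrt (c₀ ^ 2 * W1 μ ν ^ 2 + D) ≤
        Real.sqrt (c₀ ^ 2 * W1 μ ν ^ 2) + Real.sqrt D :=
      sqrt_add_le (by positivity) hD0
    have h3 : Real.sqrt (c₀ ^ 2 * W1 μ ν ^ 2) = c₀ * W1 μ ν := by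
      rw [← mul_pow, Real.sqrt_sq (by positivity)]
    have h4 : Real.sqrt D ≤ 8 * Real.sqrt (Real.sqrt (M / c₀ ^ 2)) := by
      have hD' : D = 8 * Real.sqrt (M / c₀ ^ 2) := by rw [hDdef, hsqrtdiv]; ring
      rw [hD', Real.sqrt_mul (by norm_num)]
      have h5 : Real.sqrt 8 ≤ 8 := by
        nlinarith [Real.sq_sqrt (show (0:ℝ) ≤ 8 by norm_num), Real.sqrt_nonneg 8]
      exact mul_le_mul_of_nonneg_right h5 (Real.sqrt_nonneg _)
    calc W2 μ ν ≤ Real.sqrt (c₀ ^ 2 * W1 μ ν ^ 2) + Real.sqrt D := le_trans h1 h2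
      _ ≤ c₀ * W1 μ ν + 8 * Real.sqrt (Real.sqrt (M / c₀ ^ 2)) := by rw [h3]; linarith
end

section
/- Fix k > 1 and let w_k(x) = (1+|x|)^k, X_k = {n ∈ L¹(ℝ) : ∫ w_k |n| < ∞} with norm ‖n‖ = ∫ w_k |n|. Let Γ be a Gaussian density (or any nonnegative kernel with w_k·Γ ∈ L¹). For n with ∫ n ≠ 0 define T[n](x) = ∫∫ Γ(x−(y+y')/2)·n(y)·n(y')/(∫n) dy dy'. Then for all n, ñ ∈ X_k ∩ C_b(ℝ) with nonzero integrals, ‖T[n] − T[ñ]‖_{X_k} ≤ C·(‖n‖_{X_k}/|∫n|)·(‖ñ‖_{X_k}/|∫ñ|)·‖n − ñ‖_{X_k}, where C depends only on k and Γ. -/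
set_option maxHeartbeats 1000000

open Real MeasureTheory

lemma aux_w_one_le {k : ℝ} (hk : 0 ≤ k) (x : ℝ) : 1 ≤ (1 + |x|) ^ k :=
  Real.one_le_rpow (by linarith [abs_nonneg x]) hk

lemma aux_w_pos {k : ℝ} (hk : 0 ≤ k) (x : ℝ) : 0 < (1 + |x|) ^ k :=
  lt_of_lt_of_le one_pos (aux_w_one_le hk x)

lemma aux_w_cont {k : ℝ} : Continuous fun x : ℝ => (1 + |x|) ^ k :=
  (continuous_const.add continuous_abs).rpow_const
    (fun x => Or.inl (ne_of_gt (show (0:ℝ) < 1 + |x| by positivity)))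

lemma aux_w_add {k : ℝ} (hk : 0 ≤ k) (a b : ℝ) :
    (1 + |a + b|) ^ k ≤ (1 + |a|) ^ k * (1 + |b|) ^ k := by
  rw [← Real.mul_rpow (by positivity) (by positivity)]
  apply Real.rpow_le_rpow (by positivity) _ hk
  have h := abs_add_le a b
  nlinarith [abs_nonneg a, abs_nonneg b]

lemma aux_w_half {k : ℝ} (hk : 0 ≤ k) (y y' : ℝ) :
    (1 + |(y + y') / 2|) ^ k ≤ (1 + |y|) ^ k * (1 + |y'|) ^ k := by
  rw [← Real.mul_rpow (by positivity) (by positivity)]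
  apply Real.rpow_le_rpow (by positivity) _ hk
  have h := abs_add_le y y'
  have h2 : |(y + y') / 2| = |y + y'| / 2 := by rw [abs_div]; norm_num
  nlinarith [abs_nonneg y, abs_nonneg y']

lemma aux_w_three {k : ℝ} (hk : 0 ≤ k) (x y y' : ℝ) :
    (1 + |x|) ^ k ≤ (1 + |x - (y + y') / 2|) ^ k * ((1 + |y|) ^ k * (1 + |y'|) ^ k) := by
  have h1 : (1 + |x|) ^ k ≤ (1 + |x - (y + y') / 2|) ^ k * (1 + |(y + y') / 2|) ^ k := by
    simpa using aux_w_add hk (x - (y + y') / 2) ((y + y') / 2)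
  refine h1.trans ?_
  exact mul_le_mul_of_nonneg_left (aux_w_half hk y y') (by positivity)

/-- translate: `∫ x, w x * Γ (x - s) ≤ w s * ∫ x, w x * Γ x`, plus integrability. -/
lemma aux_translate {k : ℝ} (hk : 0 ≤ k) {Γ : ℝ → ℝ} (hΓ : ∀ x, 0 ≤ Γ x)
    (hΓm : Measurable Γ)
    (hΓint : Integrable (fun x => (1 + |x|) ^ k * Γ x)) (s : ℝ) :
    Integrable (fun x => (1 + |x|) ^ k * Γ (x - s)) ∧
      ∫ x, (1 + |x|) ^ k * Γ (x - s) ≤ (1 + |s|) ^ k * ∫ x, (1 + |x|) ^ k * Γ x := by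
  have hcomp : Integrable (fun x => (1 + |x - s|) ^ k * Γ (x - s)) :=
    hΓint.comp_sub_right s
  have hmeas : AEStronglyMeasurable (fun x => (1 + |x|) ^ k * Γ (x - s)) volume :=
    (aux_w_cont.measurable.mul (hΓm.comp (measurable_id.sub_const s))).aestronglyMeasurable
  have hbound : ∀ x, (1 + |x|) ^ k * Γ (x - s)
      ≤ (1 + |s|) ^ k * ((1 + |x - s|) ^ k * Γ (x - s)) := by
    intro x
    have h1 : (1 + |x|) ^ k ≤ (1 + |x - s|) ^ k * (1 + |s|) ^ k := by
      simpa using aux_w_add hk (x - s) s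
    have h2 := hΓ (x - s)
    nlinarith [aux_w_pos hk (x - s), aux_w_pos hk s, aux_w_pos hk x]
  have hint : Integrable (fun x => (1 + |x|) ^ k * Γ (x - s)) := by
    refine (hcomp.const_mul ((1 + |s|) ^ k)).mono' hmeas (Filter.Eventually.of_forall fun x => ?_)
    rw [Real.norm_eq_abs, abs_of_nonneg (mul_nonneg (aux_w_pos hk x).le (hΓ (x - s)))]
    exact hbound x
  refine ⟨hint, ?_⟩
  calc ∫ x, (1 + |x|) ^ k * Γ (x - s)
      ≤ ∫ x, (1 + |s|) ^ k * ((1 + |x - s|) ^ k * Γ (x - s)) :=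
        integral_mono hint (hcomp.const_mul _) hbound
    _ = (1 + |s|) ^ k * ∫ x, (1 + |x - s|) ^ k * Γ (x - s) := integral_const_mul _ _
    _ = (1 + |s|) ^ k * ∫ x, (1 + |x|) ^ k * Γ x := by
        rw [integral_sub_right_eq_self (fun x => (1 + |x|) ^ k * Γ x) s]

/-- affine substitution for `Γ`. -/
lemma aux_affine {Γ : ℝ → ℝ} (hΓint1 : Integrable Γ) (c : ℝ) :
    Integrable (fun u : ℝ => Γ (c - u / 2)) ∧
      (∫ u : ℝ, Γ (c - u / 2)) = 2 * ∫ x, Γ x := by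
  have hfun : (fun u : ℝ => Γ (c - u / 2)) = fun u => Γ ((-2⁻¹ : ℝ) * u + c) := by
    funext u; ring_nf
  constructor
  · rw [hfun]
    exact (hΓint1.comp_add_right c).comp_mul_left' (by norm_num)
  · rw [hfun]
    have := Measure.integral_comp_mul_left (fun v => Γ (v + c)) (-2⁻¹ : ℝ)
    rw [this, integral_add_right_eq_self Γ c]
    norm_num

/-- For bounded integrable `f, g`, the kernel is integrable on the product. -/
lemma aux_prodInt {Γ f g : ℝ → ℝ} (hΓ : ∀ x, 0 ≤ Γ x) (hΓm : Measurable Γ)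
    (hΓint1 : Integrable Γ)
    (hf : Integrable f) (hfm : Measurable f) (hgm : Measurable g)
    {M : ℝ} (hgb : ∀ x, |g x| ≤ M) (x : ℝ) :
    Integrable (fun p : ℝ × ℝ => Γ (x - (p.1 + p.2) / 2) * f p.1 * g p.2)
      (volume.prod volume) := by
  have hM0 : 0 ≤ M := le_trans (abs_nonneg _) (hgb 0)
  have hmeas : AEStronglyMeasurable
      (fun p : ℝ × ℝ => Γ (x - (p.1 + p.2) / 2) * f p.1 * g p.2) (volume.prod volume) :=
    (((hΓm.comp (measurable_const.sub ((measurable_fst.add measurable_snd).div_const 2))).mul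
      (hfm.comp measurable_fst)).mul (hgm.comp measurable_snd)).aestronglyMeasurable
  have harg : ∀ y y' : ℝ, x - (y + y') / 2 = (x - y / 2) - y' / 2 := by intros; ring
  have hbnd : ∀ y y' : ℝ, ‖Γ (x - (y + y') / 2) * f y * g y'‖
      ≤ (|f y| * M) * Γ ((x - y / 2) - y' / 2) := by
    intro y y'
    rw [harg y y', Real.norm_eq_abs, abs_mul, abs_mul, abs_of_nonneg (hΓ _)]
    have h1 : Γ ((x - y / 2) - y' / 2) * |f y| * |g y'|
        ≤ Γ ((x - y / 2) - y' / 2) * |f y| * M :=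
      mul_le_mul_of_nonneg_left (hgb y') (mul_nonneg (hΓ _) (abs_nonneg _))
    nlinarith [h1]
  rw [integrable_prod_iff hmeas]
  constructor
  · refine Filter.Eventually.of_forall fun y => ?_
    have hint := (aux_affine hΓint1 (x - y / 2)).1
    refine (hint.const_mul (|f y| * M)).mono' ?_ (Filter.Eventually.of_forall fun y' => hbnd y y')
    apply Measurable.aestronglyMeasurable
    fun_prop
  · refine (hf.abs.const_mul (M * (2 * ∫ t, Γ t))).mono'
      (hmeas.norm.integral_prod_right') (Filter.Eventually.of_forall fun y => ?_)
    rw [Real.norm_eq_abs, abs_of_nonneg (integral_nonneg fun y' => norm_nonneg _)]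
    calc (∫ y', ‖Γ (x - (y + y') / 2) * f y * g y'‖)
        ≤ ∫ y', (|f y| * M) * Γ ((x - y / 2) - y' / 2) := by
          refine integral_mono_of_nonneg (Filter.Eventually.of_forall fun y' => norm_nonneg _)
            ((aux_affine hΓint1 (x - y / 2)).1.const_mul _)
            (Filter.Eventually.of_forall fun y' => hbnd y y')
      _ = (|f y| * M) * (2 * ∫ t, Γ t) := by
          rw [integral_const_mul, (aux_affine hΓint1 (x - y / 2)).2]
      _ = M * (2 * ∫ t, Γ t) * |f y| := by ring

/-- Local Lipschitz estimate for the normalized infinitesimal reproduction operator `T` on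
the weighted space `X_k` with weight `w_k(x) = (1+|x|)^k`, `k > 1`:
`‖T[n] − T[ñ]‖_{X_k} ≤ C (‖n‖_{X_k}/|∫n|) (‖ñ‖_{X_k}/|∫ñ|) ‖n − ñ‖_{X_k}`,
with `C` depending only on `k` and `Γ`. -/
theorem stmt12 (k : ℝ) (hk : 1 < k) (Γ : ℝ → ℝ)
    (hΓ : ∀ x, 0 ≤ Γ x) (hΓm : Measurable Γ)
    (hΓint : Integrable (fun x => (1 + |x|) ^ k * Γ x))
    (hΓint1 : Integrable Γ) :
    ∃ C > 0, ∀ n n₂ : ℝ → ℝ,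
      Continuous n → Continuous n₂ →
      (∃ M, ∀ x, |n x| ≤ M) → (∃ M, ∀ x, |n₂ x| ≤ M) →
      Integrable (fun x => (1 + |x|) ^ k * |n x|) →
      Integrable (fun x => (1 + |x|) ^ k * |n₂ x|) →
      (∫ x, n x) ≠ 0 → (∫ x, n₂ x) ≠ 0 →
      (∫ x, (1 + |x|) ^ k *
          |(∫ y, ∫ y', Γ (x - (y + y') / 2) * n y * n y' / (∫ z, n z))
            - (∫ y, ∫ y', Γ (x - (y + y') / 2) * n₂ y * n₂ y' / (∫ z, n₂ z))|)
        ≤ C * ((∫ x, (1 + |x|) ^ k * |n x|) / |∫ x, n x|)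
            * ((∫ x, (1 + |x|) ^ k * |n₂ x|) / |∫ x, n₂ x|)
            * (∫ x, (1 + |x|) ^ k * |n x - n₂ x|) := by
  have hk0 : (0:ℝ) ≤ k := by linarith
  have hw1 : ∀ x : ℝ, 1 ≤ (1 + |x|) ^ k := aux_w_one_le hk0
  set A := ∫ x, (1 + |x|) ^ k * Γ x with hAdef
  clear_value A
  have hA0 : 0 ≤ A := by
    rw [hAdef]; exact integral_nonneg fun x => mul_nonneg (aux_w_pos hk0 x).le (hΓ x)
  refine ⟨3 * A + 3, by linarith, ?_⟩
  intro n m hnc hmc hnb hmb hnint hmint hnI hmI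
  obtain ⟨M, hM⟩ := hnb
  obtain ⟨M₂, hM₂⟩ := hmb
  set I := ∫ z, n z with hIdef
  set I₂ := ∫ z, m z with hI₂def
  set Nn := ∫ x, (1 + |x|) ^ k * |n x| with hNndef
  set N₂ := ∫ x, (1 + |x|) ^ k * |m x| with hN₂def
  set Nd := ∫ x, (1 + |x|) ^ k * |n x - m x| with hNddef
  clear_value I I₂ Nn N₂ Nd
  -- basic integrability
  have hn1 : Integrable n :=
    hnint.mono' hnc.aestronglyMeasurable (Filter.Eventually.of_forall fun x => by
      rw [Real.norm_eq_abs]; exact le_mul_of_one_le_left (abs_nonneg _) (hw1 x))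
  have hm1 : Integrable m :=
    hmint.mono' hmc.aestronglyMeasurable (Filter.Eventually.of_forall fun x => by
      rw [Real.norm_eq_abs]; exact le_mul_of_one_le_left (abs_nonneg _) (hw1 x))
  have hd1 : Integrable (fun x => n x - m x) := hn1.sub hm1
  have hdint : Integrable (fun x => (1 + |x|) ^ k * |n x - m x|) := by
    refine (hnint.add hmint).mono'
      ((aux_w_cont.mul (hnc.sub hmc).abs).aestronglyMeasurable)
      (Filter.Eventually.of_forall fun x => ?_)
    rw [Real.norm_eq_abs, abs_of_nonneg (by positivity)]
    have h1 : |n x - m x| ≤ |n x| + |m x| := abs_sub _ _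
    simp only [Pi.add_apply]
    nlinarith [mul_le_mul_of_nonneg_left h1 (aux_w_pos hk0 x).le]
  -- norms dominate integrals
  have hIn : |I| ≤ Nn := by
    rw [hIdef, hNndef]
    calc |∫ z, n z| ≤ ∫ z, |n z| := by
          simpa [Real.norm_eq_abs] using norm_integral_le_integral_norm n
      _ ≤ ∫ x, (1 + |x|) ^ k * |n x| :=
          integral_mono hn1.abs hnint fun x => le_mul_of_one_le_left (abs_nonneg _) (hw1 x)
  have hI₂m : |I₂| ≤ N₂ := by
    rw [hI₂def, hN₂def]
    calc |∫ z, m z| ≤ ∫ z, |m z| := by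
          simpa [Real.norm_eq_abs] using norm_integral_le_integral_norm m
      _ ≤ ∫ x, (1 + |x|) ^ k * |m x| :=
          integral_mono hm1.abs hmint fun x => le_mul_of_one_le_left (abs_nonneg _) (hw1 x)
  have hIpos : 0 < |I| := abs_pos.2 hnI
  have hI₂pos : 0 < |I₂| := abs_pos.2 hmI
  have hNd0 : 0 ≤ Nd := by
    rw [hNddef]; exact integral_nonneg fun x => mul_nonneg (aux_w_pos hk0 x).le (abs_nonneg _)
  have hId : |I₂ - I| ≤ Nd := by
    have he : I₂ - I = -∫ x, (n x - m x) := by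
      rw [integral_sub hn1 hm1, hIdef, hI₂def]; ring
    rw [he, abs_neg]
    calc |∫ x, (n x - m x)| ≤ ∫ x, |n x - m x| := by
          simpa [Real.norm_eq_abs] using norm_integral_le_integral_norm (fun x => n x - m x)
      _ ≤ Nd := by
          rw [hNddef]
          exact integral_mono hd1.abs hdint fun x =>
            le_mul_of_one_le_left (abs_nonneg _) (hw1 x)
  -- product integrability of kernels
  have hPn : ∀ x : ℝ, Integrable
      (fun p : ℝ × ℝ => Γ (x - (p.1 + p.2) / 2) * n p.1 * n p.2) (volume.prod volume) :=
    fun x => aux_prodInt hΓ hΓm hΓint1 hn1 hnc.measurable hnc.measurable hM x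
  have hPm : ∀ x : ℝ, Integrable
      (fun p : ℝ × ℝ => Γ (x - (p.1 + p.2) / 2) * m p.1 * m p.2) (volume.prod volume) :=
    fun x => aux_prodInt hΓ hΓm hΓint1 hm1 hmc.measurable hmc.measurable hM₂ x
  -- iterated integrals as product integrals
  have hGn : ∀ x : ℝ, (∫ y, ∫ y', Γ (x - (y + y') / 2) * n y * n y' / I)
      = (∫ p : ℝ × ℝ, Γ (x - (p.1 + p.2) / 2) * n p.1 * n p.2 ∂(volume.prod volume)) / I := by
    intro x
    simp_rw [integral_div]
    rw [integral_integral (hPn x)]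
  have hGm : ∀ x : ℝ, (∫ y, ∫ y', Γ (x - (y + y') / 2) * m y * m y' / I₂)
      = (∫ p : ℝ × ℝ, Γ (x - (p.1 + p.2) / 2) * m p.1 * m p.2 ∂(volume.prod volume)) / I₂ := by
    intro x
    simp_rw [integral_div]
    rw [integral_integral (hPm x)]
  have hΔ : ∀ x : ℝ, (∫ y, ∫ y', Γ (x - (y + y') / 2) * n y * n y' / I)
      - (∫ y, ∫ y', Γ (x - (y + y') / 2) * m y * m y' / I₂)
      = ∫ p : ℝ × ℝ, Γ (x - (p.1 + p.2) / 2)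
          * (n p.1 * n p.2 / I - m p.1 * m p.2 / I₂) ∂(volume.prod volume) := by
    intro x
    rw [hGn x, hGm x, div_eq_mul_inv, div_eq_mul_inv, ← integral_mul_const,
      ← integral_mul_const, ← integral_sub ((hPn x).mul_const _) ((hPm x).mul_const _)]
    exact integral_congr_ae (Filter.Eventually.of_forall fun p => by ring)
  have hΔabs : ∀ x : ℝ, |(∫ y, ∫ y', Γ (x - (y + y') / 2) * n y * n y' / I)
      - (∫ y, ∫ y', Γ (x - (y + y') / 2) * m y * m y' / I₂)|
      ≤ ∫ p : ℝ × ℝ, Γ (x - (p.1 + p.2) / 2)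
          * |n p.1 * n p.2 / I - m p.1 * m p.2 / I₂| ∂(volume.prod volume) := by
    intro x
    rw [hΔ x]
    calc |∫ p : ℝ × ℝ, Γ (x - (p.1 + p.2) / 2)
          * (n p.1 * n p.2 / I - m p.1 * m p.2 / I₂) ∂(volume.prod volume)|
        = ‖∫ p : ℝ × ℝ, Γ (x - (p.1 + p.2) / 2)
          * (n p.1 * n p.2 / I - m p.1 * m p.2 / I₂) ∂(volume.prod volume)‖ :=
          (Real.norm_eq_abs _).symm
      _ ≤ ∫ p : ℝ × ℝ, ‖Γ (x - (p.1 + p.2) / 2)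
          * (n p.1 * n p.2 / I - m p.1 * m p.2 / I₂)‖ ∂(volume.prod volume) :=
          norm_integral_le_integral_norm _
      _ = _ := integral_congr_ae (Filter.Eventually.of_forall fun p => by
              simp only [Real.norm_eq_abs, abs_mul]
              rw [abs_of_nonneg (hΓ _)])
  -- integrability of the weighted difference kernel on the product
  have hDcont : Continuous (fun p : ℝ × ℝ => n p.1 * n p.2 / I - m p.1 * m p.2 / I₂) :=
    (((hnc.comp continuous_fst).mul (hnc.comp continuous_snd)).div_const I).sub
      (((hmc.comp continuous_fst).mul (hmc.comp continuous_snd)).div_const I₂)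
  have hT1 : Integrable (fun p : ℝ × ℝ =>
      ((1 + |p.1|) ^ k * |n p.1 - m p.1|) * ((1 + |p.2|) ^ k * |n p.2|))
      (volume.prod volume) := hdint.mul_prod hnint
  have hT2 : Integrable (fun p : ℝ × ℝ =>
      ((1 + |p.1|) ^ k * |m p.1|) * ((1 + |p.2|) ^ k * |n p.2 - m p.2|))
      (volume.prod volume) := hmint.mul_prod hdint
  have hT3 : Integrable (fun p : ℝ × ℝ =>
      ((1 + |p.1|) ^ k * |m p.1|) * ((1 + |p.2|) ^ k * |n p.2|))
      (volume.prod volume) := hmint.mul_prod hnint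
  have hU1 : Integrable (fun p : ℝ × ℝ =>
      ((1 + |p.1|) ^ k * |n p.1 - m p.1|) * ((1 + |p.2|) ^ k * |n p.2|) * |I|⁻¹)
      (volume.prod volume) := hT1.mul_const _
  have hU2 : Integrable (fun p : ℝ × ℝ =>
      ((1 + |p.1|) ^ k * |m p.1|) * ((1 + |p.2|) ^ k * |n p.2 - m p.2|) * |I₂|⁻¹)
      (volume.prod volume) := hT2.mul_const _
  have hU3 : Integrable (fun p : ℝ × ℝ =>
      ((1 + |p.1|) ^ k * |m p.1|) * ((1 + |p.2|) ^ k * |n p.2|)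
        * (|I₂ - I| * (|I|⁻¹ * |I₂|⁻¹))) (volume.prod volume) := hT3.mul_const _
  have hU23 : Integrable (fun p : ℝ × ℝ =>
      ((1 + |p.1|) ^ k * |m p.1|) * ((1 + |p.2|) ^ k * |n p.2 - m p.2|) * |I₂|⁻¹
      + ((1 + |p.1|) ^ k * |m p.1|) * ((1 + |p.2|) ^ k * |n p.2|)
        * (|I₂ - I| * (|I|⁻¹ * |I₂|⁻¹))) (volume.prod volume) := hU2.add hU3
  have hUsum : Integrable (fun p : ℝ × ℝ =>
      ((1 + |p.1|) ^ k * |n p.1 - m p.1|) * ((1 + |p.2|) ^ k * |n p.2|) * |I|⁻¹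
      + (((1 + |p.1|) ^ k * |m p.1|) * ((1 + |p.2|) ^ k * |n p.2 - m p.2|) * |I₂|⁻¹
      + ((1 + |p.1|) ^ k * |m p.1|) * ((1 + |p.2|) ^ k * |n p.2|)
        * (|I₂ - I| * (|I|⁻¹ * |I₂|⁻¹)))) (volume.prod volume) := hU1.add hU23
  have hDb : ∀ p : ℝ × ℝ, (1 + |p.1|) ^ k * (1 + |p.2|) ^ k
      * |n p.1 * n p.2 / I - m p.1 * m p.2 / I₂|
      ≤ ((1 + |p.1|) ^ k * |n p.1 - m p.1|) * ((1 + |p.2|) ^ k * |n p.2|) * |I|⁻¹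
        + ((1 + |p.1|) ^ k * |m p.1|) * ((1 + |p.2|) ^ k * |n p.2 - m p.2|) * |I₂|⁻¹
        + ((1 + |p.1|) ^ k * |m p.1|) * ((1 + |p.2|) ^ k * |n p.2|)
            * (|I₂ - I| * (|I|⁻¹ * |I₂|⁻¹)) := by
    intro p
    have hsplit : n p.1 * n p.2 / I - m p.1 * m p.2 / I₂
        = (n p.1 - m p.1) * n p.2 / I + m p.1 * (n p.2 - m p.2) / I₂
          + m p.1 * n p.2 * ((I₂ - I) / (I * I₂)) := by
      field_simp
      ring
    have h1 : |n p.1 * n p.2 / I - m p.1 * m p.2 / I₂|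
        ≤ |n p.1 - m p.1| * |n p.2| / |I| + |m p.1| * |n p.2 - m p.2| / |I₂|
          + |m p.1| * |n p.2| * (|I₂ - I| / (|I| * |I₂|)) := by
      rw [hsplit]
      refine (abs_add_three _ _ _).trans (le_of_eq ?_)
      simp only [abs_mul, abs_div]
    calc (1 + |p.1|) ^ k * (1 + |p.2|) ^ k * |n p.1 * n p.2 / I - m p.1 * m p.2 / I₂|
        ≤ (1 + |p.1|) ^ k * (1 + |p.2|) ^ k
          * (|n p.1 - m p.1| * |n p.2| / |I| + |m p.1| * |n p.2 - m p.2| / |I₂|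
            + |m p.1| * |n p.2| * (|I₂ - I| / (|I| * |I₂|))) := by
          refine mul_le_mul_of_nonneg_left h1 ?_
          positivity
      _ = _ := by
          field_simp
  have hDD : Integrable (fun p : ℝ × ℝ => (1 + |p.1|) ^ k * (1 + |p.2|) ^ k
      * |n p.1 * n p.2 / I - m p.1 * m p.2 / I₂|) (volume.prod volume) := by
    refine hUsum.mono'
      ((((aux_w_cont.comp continuous_fst).mul (aux_w_cont.comp continuous_snd)).mul
        hDcont.abs).aestronglyMeasurable)
      (Filter.Eventually.of_forall fun p => ?_)
    rw [Real.norm_eq_abs, abs_of_nonneg (by positivity)]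
    exact (hDb p).trans (le_of_eq (by ring))
  have hDDval : (∫ p : ℝ × ℝ, (1 + |p.1|) ^ k * (1 + |p.2|) ^ k
      * |n p.1 * n p.2 / I - m p.1 * m p.2 / I₂| ∂(volume.prod volume))
      ≤ Nd * Nn * |I|⁻¹ + N₂ * Nd * |I₂|⁻¹ + N₂ * Nn * (|I₂ - I| * (|I|⁻¹ * |I₂|⁻¹)) := by
    calc (∫ p : ℝ × ℝ, (1 + |p.1|) ^ k * (1 + |p.2|) ^ k
        * |n p.1 * n p.2 / I - m p.1 * m p.2 / I₂| ∂(volume.prod volume))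
        ≤ ∫ p : ℝ × ℝ,
            (((1 + |p.1|) ^ k * |n p.1 - m p.1|) * ((1 + |p.2|) ^ k * |n p.2|) * |I|⁻¹
            + (((1 + |p.1|) ^ k * |m p.1|) * ((1 + |p.2|) ^ k * |n p.2 - m p.2|) * |I₂|⁻¹
            + ((1 + |p.1|) ^ k * |m p.1|) * ((1 + |p.2|) ^ k * |n p.2|)
                * (|I₂ - I| * (|I|⁻¹ * |I₂|⁻¹)))) ∂(volume.prod volume) := by
          refine integral_mono hDD hUsum fun p => ?_
          exact (hDb p).trans (le_of_eq (by ring))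
      _ = Nd * Nn * |I|⁻¹ + N₂ * Nd * |I₂|⁻¹ + N₂ * Nn * (|I₂ - I| * (|I|⁻¹ * |I₂|⁻¹)) := by
          rw [integral_add hU1 hU23, integral_add hU2 hU3,
            integral_mul_const, integral_mul_const, integral_mul_const,
            integral_prod_mul (fun a : ℝ => (1 + |a|) ^ k * |n a - m a|)
              (fun b : ℝ => (1 + |b|) ^ k * |n b|),
            integral_prod_mul (fun a : ℝ => (1 + |a|) ^ k * |m a|)
              (fun b : ℝ => (1 + |b|) ^ k * |n b - m b|),
            integral_prod_mul (fun a : ℝ => (1 + |a|) ^ k * |m a|)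
              (fun b : ℝ => (1 + |b|) ^ k * |n b|),
            hNndef, hN₂def, hNddef]
          ring
  -- inner integral bound
  have hInner : ∀ p : ℝ × ℝ,
      (∫ x, (1 + |x|) ^ k * (Γ (x - (p.1 + p.2) / 2)
        * |n p.1 * n p.2 / I - m p.1 * m p.2 / I₂|))
      ≤ ((1 + |p.1|) ^ k * (1 + |p.2|) ^ k
          * |n p.1 * n p.2 / I - m p.1 * m p.2 / I₂|) * A := by
    intro p
    calc (∫ x, (1 + |x|) ^ k * (Γ (x - (p.1 + p.2) / 2)
          * |n p.1 * n p.2 / I - m p.1 * m p.2 / I₂|))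
        = (∫ x, (1 + |x|) ^ k * Γ (x - (p.1 + p.2) / 2))
            * |n p.1 * n p.2 / I - m p.1 * m p.2 / I₂| := by
          rw [← integral_mul_const]
          exact integral_congr_ae (Filter.Eventually.of_forall fun x => by ring)
      _ ≤ ((1 + |(p.1 + p.2) / 2|) ^ k * A)
            * |n p.1 * n p.2 / I - m p.1 * m p.2 / I₂| := by
          refine mul_le_mul_of_nonneg_right ?_ (abs_nonneg _)
          simpa [hAdef] using (aux_translate hk0 hΓ hΓm hΓint ((p.1 + p.2) / 2)).2
      _ ≤ (((1 + |p.1|) ^ k * (1 + |p.2|) ^ k) * A)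
            * |n p.1 * n p.2 / I - m p.1 * m p.2 / I₂| := by
          refine mul_le_mul_of_nonneg_right
            (mul_le_mul_of_nonneg_right (aux_w_half hk0 p.1 p.2) hA0) (abs_nonneg _)
      _ = ((1 + |p.1|) ^ k * (1 + |p.2|) ^ k
            * |n p.1 * n p.2 / I - m p.1 * m p.2 / I₂|) * A := by ring
  -- the big swap integrability
  have hQ : Integrable (fun q : ℝ × (ℝ × ℝ) => (1 + |q.1|) ^ k
      * (Γ (q.1 - (q.2.1 + q.2.2) / 2)
        * |n q.2.1 * n q.2.2 / I - m q.2.1 * m q.2.2 / I₂|))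
      (volume.prod (volume.prod volume)) := by
    have hmeas : AEStronglyMeasurable (fun q : ℝ × (ℝ × ℝ) => (1 + |q.1|) ^ k
        * (Γ (q.1 - (q.2.1 + q.2.2) / 2)
          * |n q.2.1 * n q.2.2 / I - m q.2.1 * m q.2.2 / I₂|))
        (volume.prod (volume.prod volume)) := by
      apply Measurable.aestronglyMeasurable
      have h1 : Measurable fun q : ℝ × (ℝ × ℝ) => Γ (q.1 - (q.2.1 + q.2.2) / 2) := by
        fun_prop
      have h2 : Measurable fun q : ℝ × (ℝ × ℝ) =>
          |n q.2.1 * n q.2.2 / I - m q.2.1 * m q.2.2 / I₂| :=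
        ((hDcont.comp continuous_snd).abs).measurable
      exact ((aux_w_cont.comp continuous_fst).measurable).mul (h1.mul h2)
    rw [integrable_prod_iff' hmeas]
    constructor
    · refine Filter.Eventually.of_forall fun p => ?_
      have h := (aux_translate hk0 hΓ hΓm hΓint ((p.1 + p.2) / 2)).1.mul_const
        (|n p.1 * n p.2 / I - m p.1 * m p.2 / I₂|)
      exact h.congr (Filter.Eventually.of_forall fun x => by ring)
    · refine (hDD.mul_const A).mono' (hmeas.norm.prod_swap.integral_prod_right')
        (Filter.Eventually.of_forall fun p => ?_)
      rw [Real.norm_eq_abs, abs_of_nonneg (integral_nonneg fun x => norm_nonneg _)]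
      calc (∫ x, ‖(1 + |x|) ^ k * (Γ (x - (p.1 + p.2) / 2)
            * |n p.1 * n p.2 / I - m p.1 * m p.2 / I₂|)‖)
          = ∫ x, (1 + |x|) ^ k * (Γ (x - (p.1 + p.2) / 2)
            * |n p.1 * n p.2 / I - m p.1 * m p.2 / I₂|) := by
            refine integral_congr_ae (Filter.Eventually.of_forall fun x => ?_)
            simp only [Real.norm_eq_abs]
            rw [abs_of_nonneg (mul_nonneg (aux_w_pos hk0 x).le
              (mul_nonneg (hΓ _) (abs_nonneg _)))]
        _ ≤ _ := hInner p
  -- main estimate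
  have hmain : (∫ x, (1 + |x|) ^ k *
      |(∫ y, ∫ y', Γ (x - (y + y') / 2) * n y * n y' / I)
        - (∫ y, ∫ y', Γ (x - (y + y') / 2) * m y * m y' / I₂)|)
      ≤ A * (Nd * Nn * |I|⁻¹ + N₂ * Nd * |I₂|⁻¹
          + N₂ * Nn * (|I₂ - I| * (|I|⁻¹ * |I₂|⁻¹))) := by
    calc (∫ x, (1 + |x|) ^ k *
        |(∫ y, ∫ y', Γ (x - (y + y') / 2) * n y * n y' / I)
          - (∫ y, ∫ y', Γ (x - (y + y') / 2) * m y * m y' / I₂)|)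
        ≤ ∫ x, ∫ p : ℝ × ℝ, (1 + |x|) ^ k * (Γ (x - (p.1 + p.2) / 2)
            * |n p.1 * n p.2 / I - m p.1 * m p.2 / I₂|) ∂(volume.prod volume) := by
          refine integral_mono_of_nonneg
            (Filter.Eventually.of_forall fun x => by positivity)
            hQ.integral_prod_left (Filter.Eventually.of_forall fun x => ?_)
          calc (1 + |x|) ^ k *
              |(∫ y, ∫ y', Γ (x - (y + y') / 2) * n y * n y' / I)
                - (∫ y, ∫ y', Γ (x - (y + y') / 2) * m y * m y' / I₂)|
              ≤ (1 + |x|) ^ k * ∫ p : ℝ × ℝ, Γ (x - (p.1 + p.2) / 2)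
                  * |n p.1 * n p.2 / I - m p.1 * m p.2 / I₂| ∂(volume.prod volume) :=
                mul_le_mul_of_nonneg_left (hΔabs x) (aux_w_pos hk0 x).le
            _ = _ := (integral_const_mul _ _).symm
      _ = ∫ p : ℝ × ℝ, ∫ x, ((1 + |x|) ^ k * (Γ (x - (p.1 + p.2) / 2)
            * |n p.1 * n p.2 / I - m p.1 * m p.2 / I₂|)) ∂volume ∂(volume.prod volume) :=
          integral_integral_swap hQ
      _ ≤ ∫ p : ℝ × ℝ, ((1 + |p.1|) ^ k * (1 + |p.2|) ^ k
            * |n p.1 * n p.2 / I - m p.1 * m p.2 / I₂|) * A ∂(volume.prod volume) := by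
          refine integral_mono_of_nonneg
            (Filter.Eventually.of_forall fun p => integral_nonneg fun x =>
              mul_nonneg (aux_w_pos hk0 x).le (mul_nonneg (hΓ _) (abs_nonneg _)))
            (hDD.mul_const A) (Filter.Eventually.of_forall fun p => hInner p)
      _ = (∫ p : ℝ × ℝ, (1 + |p.1|) ^ k * (1 + |p.2|) ^ k
            * |n p.1 * n p.2 / I - m p.1 * m p.2 / I₂| ∂(volume.prod volume)) * A :=
          integral_mul_const _ _
      _ ≤ (Nd * Nn * |I|⁻¹ + N₂ * Nd * |I₂|⁻¹
            + N₂ * Nn * (|I₂ - I| * (|I|⁻¹ * |I₂|⁻¹))) * A :=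
          mul_le_mul_of_nonneg_right hDDval hA0
      _ = A * (Nd * Nn * |I|⁻¹ + N₂ * Nd * |I₂|⁻¹
            + N₂ * Nn * (|I₂ - I| * (|I|⁻¹ * |I₂|⁻¹))) := by ring
  refine hmain.trans ?_
  -- final arithmetic
  have ha := hIpos
  have hb := hI₂pos
  have ha' : |I| ≠ 0 := ne_of_gt ha
  have hb' : |I₂| ≠ 0 := ne_of_gt hb
  have hNn0 : 0 < Nn := lt_of_lt_of_le hIpos hIn
  have hN₂0 : 0 < N₂ := lt_of_lt_of_le hI₂pos hI₂m
  have e1 : A * (Nd * Nn * |I|⁻¹ + N₂ * Nd * |I₂|⁻¹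
      + N₂ * Nn * (|I₂ - I| * (|I|⁻¹ * |I₂|⁻¹)))
      = A * (Nd * Nn * |I₂| + N₂ * Nd * |I| + N₂ * Nn * |I₂ - I|) / (|I| * |I₂|) := by
    field_simp
  have e2 : (3 * A + 3) * (Nn / |I|) * (N₂ / |I₂|) * Nd
      = (3 * A + 3) * (Nn * N₂ * Nd) / (|I| * |I₂|) := by
    field_simp
  rw [e1, e2, div_le_div_iff₀ (by positivity) (by positivity)]
  nlinarith [mul_le_mul_of_nonneg_left hI₂m (mul_nonneg (mul_nonneg hNd0 hNn0.le) hA0),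
    mul_le_mul_of_nonneg_left hIn (mul_nonneg (mul_nonneg hN₂0.le hNd0) hA0),
    mul_le_mul_of_nonneg_left hId (mul_nonneg (mul_nonneg hN₂0.le hNn0.le) hA0),
    mul_pos ha hb, mul_nonneg (mul_nonneg hNn0.le hN₂0.le) hNd0,
    mul_nonneg (mul_nonneg (mul_nonneg hNn0.le hN₂0.le) hNd0) (mul_pos ha hb).le]
end

section
/- Let J : [0,∞) → ℝ solve ε²·J'(t) = κ − J(t)·b(t) where b is continuous with a₀ ≤ b(t) for all t, a₀ > 0, κ > 0, J(0) > 0. Suppose moreover |b(t) − b(s)| ≤ C_b·|t−s| for all s, t. Then for β ∈ (1,2) and all t ≥ ε^β, |J(t) − κ/b(t)| ≤ (J(0) + κ/a₀)·exp(−a₀/ε^{2−β}) + C·ε^β, where C depends only on κ, a₀, C_b. -/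
open Real

set_option maxHeartbeats 1000000 in
/-- Quasi-static relaxation: if `ε² J' = κ − J b(t)` with `b` Lipschitz and `b ≥ a₀ > 0`,
`J(0) > 0`, then for `β ∈ (1,2)` and `t ≥ ε^β`,
`|J(t) − κ/b(t)| ≤ (J(0) + κ/a₀) exp(−a₀/ε^{2−β}) + C ε^β` with `C = C(κ, a₀, C_b)`. -/
theorem stmt16 (κ a₀ Cb : ℝ) (hκ : 0 < κ) (ha : 0 < a₀) (hCb : 0 ≤ Cb) :
    ∃ C > 0, ∀ (ε β : ℝ) (J b : ℝ → ℝ),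
      0 < ε → ε ≤ 1 → 1 < β → β < 2 →
      Continuous b → (∀ t : ℝ, a₀ ≤ b t) →
      (∀ s t : ℝ, |b t - b s| ≤ Cb * |t - s|) →
      0 < J 0 →
      (∀ t : ℝ, 0 ≤ t → HasDerivAt J ((κ - J t * b t) / ε ^ 2) t) →
      ∀ t : ℝ, ε ^ β ≤ t →
        |J t - κ / b t| ≤ (J 0 + κ / a₀) * Real.exp (-a₀ / ε ^ (2 - β)) + C * ε ^ β := by
  refine ⟨κ * Cb / a₀ ^ 2 + 1, by positivity, ?_⟩
  intro ε β J b hε hε1 hβ1 hβ2 hbc hba hbl hJ0 hJ t ht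
  have hε2 : (0:ℝ) < ε ^ 2 := by positivity
  have hδpos : (0:ℝ) < ε ^ β := Real.rpow_pos_of_pos hε β
  set δ : ℝ := ε ^ β with hδdef
  have ht0 : 0 ≤ t - δ := by linarith
  set t₀ : ℝ := t - δ with ht₀def
  have ht0t : t₀ ≤ t := by simp only [ht₀def]; linarith
  -- derivative of integral of b
  have hBD : ∀ a s : ℝ, HasDerivAt (fun u => ∫ x in a..u, b x) (b s) s := fun a s =>
    intervalIntegral.integral_hasDerivAt_right (hbc.intervalIntegrable _ _)
      (hbc.stronglyMeasurableAtFilter _ _) hbc.continuousAt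
  have hBcont : ∀ a : ℝ, Continuous (fun u => ∫ x in a..u, b x) := fun a =>
    (Differentiable.continuous (fun s => (hBD a s).differentiableAt))
  have hJc : ContinuousOn J (Set.Ici 0) := fun u hu =>
    ((hJ u hu).continuousAt).continuousWithinAt
  -- Positivity of J on [0, ∞)
  have hJpos : ∀ s : ℝ, 0 ≤ s → 0 < J s := by
    intro s hs
    set Bg : ℝ → ℝ := fun u => ∫ x in (0:ℝ)..u, b x with hBgdef
    have hΦ : ∀ u ∈ Set.uIcc (0:ℝ) s,
        HasDerivAt (fun u => J u * Real.exp (Bg u / ε ^ 2))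
          (Real.exp (Bg u / ε ^ 2) * (κ / ε ^ 2)) u := by
      intro u hu
      rw [Set.uIcc_of_le hs] at hu
      have h1 := hJ u hu.1
      have h2 := (((hBD 0 u).div_const (ε ^ 2)).exp)
      have := h1.mul h2
      refine this.congr_deriv ?_
      field_simp
      ring
    have hint : IntervalIntegrable (fun u => Real.exp (Bg u / ε ^ 2) * (κ / ε ^ 2))
        MeasureTheory.volume 0 s :=
      (((hBcont 0).div_const _).rexp.mul continuous_const).intervalIntegrable _ _
    have hFTC := intervalIntegral.integral_eq_sub_of_hasDerivAt hΦ hint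
    have hge : 0 ≤ ∫ u in (0:ℝ)..s, Real.exp (Bg u / ε ^ 2) * (κ / ε ^ 2) :=
      intervalIntegral.integral_nonneg hs (fun u _ => by positivity)
    have hBg0 : Bg 0 = 0 := by simp [hBgdef]
    have hprod : 0 < J s * Real.exp (Bg s / ε ^ 2) := by
      have : J 0 * Real.exp (Bg 0 / ε ^ 2) ≤ J s * Real.exp (Bg s / ε ^ 2) := by linarith
      rw [hBg0] at this
      simp at this
      linarith
    nlinarith [Real.exp_pos (Bg s / ε ^ 2)]
  -- Upper bound on J
  have hJub : ∀ s : ℝ, 0 ≤ s → J s ≤ J 0 + κ / a₀ := by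
    intro s hs
    have hψ : ∀ u ∈ Set.uIcc (0:ℝ) s,
        HasDerivAt (fun u => (J u - κ / a₀) * Real.exp (a₀ * u / ε ^ 2))
          (Real.exp (a₀ * u / ε ^ 2) * (J u * (a₀ - b u)) / ε ^ 2) u := by
      intro u hu
      rw [Set.uIcc_of_le hs] at hu
      have h1 := (hJ u hu.1).sub_const (κ / a₀)
      have h2 := ((((hasDerivAt_id u).const_mul a₀).div_const (ε ^ 2)).exp)
      have := h1.mul h2
      refine this.congr_deriv ?_
      simp only [id]
      field_simp
      ring
    have hint : IntervalIntegrable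
        (fun u => Real.exp (a₀ * u / ε ^ 2) * (J u * (a₀ - b u)) / ε ^ 2)
        MeasureTheory.volume 0 s := by
      apply ContinuousOn.intervalIntegrable
      rw [Set.uIcc_of_le hs]
      apply ContinuousOn.div_const
      exact (continuous_const.mul continuous_id |>.div_const _ |>.rexp.continuousOn).mul
        ((hJc.mono (Set.Icc_subset_Ici_self)).mul
          ((continuous_const.sub hbc).continuousOn))
    have hFTC := intervalIntegral.integral_eq_sub_of_hasDerivAt hψ hint
    have hle : (∫ u in (0:ℝ)..s, Real.exp (a₀ * u / ε ^ 2) * (J u * (a₀ - b u)) / ε ^ 2) ≤ 0 := by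
      have := intervalIntegral.integral_nonneg (μ := MeasureTheory.volume) (f := fun u =>
          -(Real.exp (a₀ * u / ε ^ 2) * (J u * (a₀ - b u)) / ε ^ 2)) hs (fun u hu => by
        have h1 : 0 ≤ J u := (hJpos u hu.1).le
        have h2 : a₀ - b u ≤ 0 := by linarith [hba u]
        have : Real.exp (a₀ * u / ε ^ 2) * (J u * (a₀ - b u)) / ε ^ 2 ≤ 0 := by
          apply div_nonpos_of_nonpos_of_nonneg _ hε2.le
          exact mul_nonpos_of_nonneg_of_nonpos (Real.exp_pos _).le
            (mul_nonpos_of_nonneg_of_nonpos h1 h2)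
        linarith)
      rw [intervalIntegral.integral_neg] at this
      linarith
    have hψs : (J s - κ / a₀) * Real.exp (a₀ * s / ε ^ 2) ≤ J 0 - κ / a₀ := by
      have h0 : (J 0 - κ / a₀) * Real.exp (a₀ * 0 / ε ^ 2) = J 0 - κ / a₀ := by simp
      linarith [hFTC ▸ hle, h0]
    have hE1 : 1 ≤ Real.exp (a₀ * s / ε ^ 2) := Real.one_le_exp (by positivity)
    rcases le_or_gt (J s) (κ / a₀) with h | h
    · have : 0 < κ / a₀ := by positivity
      linarith
    · have h1 : J s - κ / a₀ ≤ (J s - κ / a₀) * Real.exp (a₀ * s / ε ^ 2) :=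
        le_mul_of_one_le_right (by linarith) hE1
      have hpos : 0 < κ / a₀ := by positivity
      linarith
  -- Main argument on [t₀, t] with frozen coefficient b t
  set B : ℝ → ℝ := fun s => ∫ x in t₀..s, b x with hBdef
  have hbt : 0 < b t := lt_of_lt_of_le ha (hba t)
  have hκbt : κ / b t ≤ κ / a₀ := div_le_div_of_nonneg_left hκ.le ha (hba t)
  have hκbt0 : 0 < κ / b t := by positivity
  set φ : ℝ → ℝ := fun s => (J s - κ / b t) * Real.exp (B s / ε ^ 2) with hφdef
  set g : ℝ → ℝ := fun s => Real.exp (B s / ε ^ 2) * (κ / b t * (b t - b s)) / ε ^ 2 with hgdef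
  have hgc : Continuous g :=
    ((((hBcont t₀).div_const _).rexp).mul (continuous_const.mul (continuous_const.sub hbc))).div_const _
  have hφ : ∀ s ∈ Set.uIcc t₀ t, HasDerivAt φ (g s) s := by
    intro s hs
    rw [Set.uIcc_of_le ht0t] at hs
    have hs0 : 0 ≤ s := le_trans ht0 hs.1
    have h1 := (hJ s hs0).sub_const (κ / b t)
    have h2 := ((hBD t₀ s).div_const (ε ^ 2)).exp
    have := h1.mul h2
    refine this.congr_deriv ?_
    simp only [hgdef]
    field_simp
    ring
  have hFTC := intervalIntegral.integral_eq_sub_of_hasDerivAt hφ (hgc.intervalIntegrable _ _)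
  have hBt₀ : B t₀ = 0 := intervalIntegral.integral_same
  have hφt₀ : φ t₀ = J t₀ - κ / b t := by simp [hφdef, hBt₀]
  have hφt : φ t = φ t₀ + ∫ s in t₀..t, g s := by linarith [hFTC]
  have hcancel : Real.exp (B t / ε ^ 2) * Real.exp (-(B t) / ε ^ 2) = 1 := by
    rw [← Real.exp_add, neg_div, add_neg_cancel, Real.exp_zero]
  have hJt : J t - κ / b t = (φ t₀ + ∫ s in t₀..t, g s) * Real.exp (-(B t) / ε ^ 2) := by
    rw [← hφt]
    show J t - κ / b t = (J t - κ / b t) * Real.exp (B t / ε ^ 2) * Real.exp (-(B t) / ε ^ 2)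
    rw [mul_assoc, hcancel, mul_one]
  -- lower bound on B t
  have hBt_lb : a₀ * δ ≤ B t := by
    have h1 : ∫ _x in t₀..t, (a₀:ℝ) ≤ ∫ x in t₀..t, b x :=
      intervalIntegral.integral_mono_on ht0t intervalIntegrable_const
        (hbc.intervalIntegrable _ _) (fun x _ => hba x)
    rw [intervalIntegral.integral_const, smul_eq_mul] at h1
    have : t - t₀ = δ := by simp [ht₀def]
    rw [this] at h1
    simpa [hBdef, mul_comm] using h1
  -- first term bound
  have hφt₀abs : |φ t₀| ≤ J 0 + κ / a₀ := by
    rw [hφt₀, abs_le]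
    constructor
    · have := hJpos t₀ ht0
      linarith
    · have := hJub t₀ ht0
      linarith
  have hrpow : -(a₀ * δ) / ε ^ 2 = -a₀ / ε ^ (2 - β) := by
    have h2 : (ε:ℝ) ^ (2 - β) = ε ^ (2:ℝ) / ε ^ β := Real.rpow_sub hε 2 β
    have h3 : (ε:ℝ) ^ (2:ℝ) = ε ^ (2:ℕ) := by
      rw [← Real.rpow_natCast ε 2]; norm_num
    rw [h2, h3, ← hδdef]
    rw [div_div_eq_mul_div]
    rw [div_eq_div_iff (by positivity) (by positivity)]
    ring
  have hexp1 : Real.exp (-(B t) / ε ^ 2) ≤ Real.exp (-a₀ / ε ^ (2 - β)) := by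
    rw [← hrpow]
    exact Real.exp_le_exp.mpr ((div_le_div_iff_of_pos_right hε2).mpr (by linarith))
  -- second term bound
  set M : ℝ := κ / a₀ * (Cb * δ) / ε ^ 2 with hMdef
  have hM0 : 0 ≤ M := by positivity
  set K : ℝ := Real.exp (B t / ε ^ 2) with hKdef
  have hgb : ∀ s ∈ Set.Icc t₀ t, |g s| ≤ M * K * Real.exp (a₀ * (s - t) / ε ^ 2) := by
    intro s hs
    have hbsub : B t - B s = ∫ x in s..t, b x :=
      intervalIntegral.integral_interval_sub_left (hbc.intervalIntegrable _ _)
        (hbc.intervalIntegrable _ _)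
    have hBs : B s ≤ B t + a₀ * (s - t) := by
      have h1 : ∫ _x in s..t, (a₀:ℝ) ≤ ∫ x in s..t, b x :=
        intervalIntegral.integral_mono_on hs.2 intervalIntegrable_const
          (hbc.intervalIntegrable _ _) (fun x _ => hba x)
      rw [intervalIntegral.integral_const, smul_eq_mul] at h1
      nlinarith [hbsub]
    have hexps : Real.exp (B s / ε ^ 2) ≤ K * Real.exp (a₀ * (s - t) / ε ^ 2) := by
      rw [hKdef, ← Real.exp_add, ← add_div]
      exact Real.exp_le_exp.mpr ((div_le_div_iff_of_pos_right hε2).mpr hBs)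
    have hb1 : |b t - b s| ≤ Cb * δ := by
      calc |b t - b s| ≤ Cb * |t - s| := hbl s t
        _ ≤ Cb * δ := by
            have : |t - s| = t - s := abs_of_nonneg (by linarith [hs.2])
            rw [this]
            have : t - s ≤ δ := by simp only [ht₀def] at hs; linarith [hs.1]
            nlinarith
    have hg1 : |g s| = Real.exp (B s / ε ^ 2) * (κ / b t * |b t - b s|) / ε ^ 2 := by
      simp only [hgdef]
      rw [abs_div, abs_mul, abs_mul, Real.abs_exp, abs_of_pos hκbt0, abs_of_pos hε2]
    rw [hg1]
    calc Real.exp (B s / ε ^ 2) * (κ / b t * |b t - b s|) / ε ^ 2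
        ≤ Real.exp (B s / ε ^ 2) * (κ / a₀ * (Cb * δ)) / ε ^ 2 := by
          apply div_le_div_of_nonneg_right _ hε2.le
          apply mul_le_mul_of_nonneg_left _ (Real.exp_pos _).le
          exact mul_le_mul hκbt hb1 (abs_nonneg _) (by positivity)
      _ ≤ (K * Real.exp (a₀ * (s - t) / ε ^ 2)) * (κ / a₀ * (Cb * δ)) / ε ^ 2 := by
          apply div_le_div_of_nonneg_right _ hε2.le
          exact mul_le_mul_of_nonneg_right hexps (by positivity)
      _ = M * K * Real.exp (a₀ * (s - t) / ε ^ 2) := by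
          rw [hMdef]; ring
  -- integral of the exponential bound
  have hEFTC : ∀ s ∈ Set.uIcc t₀ t,
      HasDerivAt (fun s => ε ^ 2 / a₀ * Real.exp (a₀ * (s - t) / ε ^ 2))
        (Real.exp (a₀ * (s - t) / ε ^ 2)) s := by
    intro s _
    have h1 := ((((hasDerivAt_id s).sub_const t).const_mul a₀).div_const (ε ^ 2)).exp
    have := h1.const_mul (ε ^ 2 / a₀)
    refine this.congr_deriv ?_
    simp only [id]
    field_simp
  have hEcont : Continuous (fun s => Real.exp (a₀ * (s - t) / ε ^ 2)) := by
    apply Real.continuous_exp.comp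
    exact ((continuous_const.mul (continuous_id.sub continuous_const)).div_const _)
  have hEint := intervalIntegral.integral_eq_sub_of_hasDerivAt hEFTC
    (hEcont.intervalIntegrable _ _)
  have hEub : (∫ s in t₀..t, Real.exp (a₀ * (s - t) / ε ^ 2)) ≤ ε ^ 2 / a₀ := by
    rw [hEint]
    have : a₀ * (t - t) / ε ^ 2 = 0 := by ring
    rw [this, Real.exp_zero, mul_one]
    have := Real.exp_pos (a₀ * (t₀ - t) / ε ^ 2)
    nlinarith [div_pos hε2 ha]
  have hIg : |∫ s in t₀..t, g s| ≤ M * K * (ε ^ 2 / a₀) := by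
    calc |∫ s in t₀..t, g s| ≤ ∫ s in t₀..t, |g s| :=
          intervalIntegral.abs_integral_le_integral_abs ht0t
      _ ≤ ∫ s in t₀..t, M * K * Real.exp (a₀ * (s - t) / ε ^ 2) := by
          apply intervalIntegral.integral_mono_on ht0t (hgc.abs.intervalIntegrable _ _)
            ((continuous_const.mul hEcont).intervalIntegrable _ _) hgb
      _ = M * K * ∫ s in t₀..t, Real.exp (a₀ * (s - t) / ε ^ 2) := by
          rw [← intervalIntegral.integral_const_mul]
      _ ≤ M * K * (ε ^ 2 / a₀) := by
          apply mul_le_mul_of_nonneg_left hEub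
          positivity
  -- assemble
  have hEneg : (0:ℝ) ≤ Real.exp (-(B t) / ε ^ 2) := (Real.exp_pos _).le
  have habs : |J t - κ / b t| ≤
      (|φ t₀| + |∫ s in t₀..t, g s|) * Real.exp (-(B t) / ε ^ 2) := by
    rw [hJt, abs_mul, Real.abs_exp]
    exact mul_le_mul_of_nonneg_right (abs_add_le _ _) hEneg
  have hterm2 : |∫ s in t₀..t, g s| * Real.exp (-(B t) / ε ^ 2) ≤ κ * Cb / a₀ ^ 2 * δ := by
    calc |∫ s in t₀..t, g s| * Real.exp (-(B t) / ε ^ 2)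
        ≤ M * K * (ε ^ 2 / a₀) * Real.exp (-(B t) / ε ^ 2) :=
          mul_le_mul_of_nonneg_right hIg hEneg
      _ = M * (ε ^ 2 / a₀) * (K * Real.exp (-(B t) / ε ^ 2)) := by ring
      _ = M * (ε ^ 2 / a₀) := by rw [hKdef, hcancel, mul_one]
      _ = κ * Cb / a₀ ^ 2 * δ := by
          rw [hMdef]
          field_simp
  have hterm1 : |φ t₀| * Real.exp (-(B t) / ε ^ 2) ≤
      (J 0 + κ / a₀) * Real.exp (-a₀ / ε ^ (2 - β)) := by
    apply mul_le_mul hφt₀abs hexp1 hEneg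
    positivity
  have hCδ : κ * Cb / a₀ ^ 2 * δ ≤ (κ * Cb / a₀ ^ 2 + 1) * δ := by nlinarith
  calc |J t - κ / b t| ≤ (|φ t₀| + |∫ s in t₀..t, g s|) * Real.exp (-(B t) / ε ^ 2) := habs
    _ = |φ t₀| * Real.exp (-(B t) / ε ^ 2) + |∫ s in t₀..t, g s| * Real.exp (-(B t) / ε ^ 2) := by
        ring
    _ ≤ (J 0 + κ / a₀) * Real.exp (-a₀ / ε ^ (2 - β)) + (κ * Cb / a₀ ^ 2 + 1) * δ := by
        have := le_trans hterm2 hCδ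
        linarith
end

section
/- Let q be a probability density on ℝ with mean M₁ and finite second moment, and let m : ℝ → ℝ be C² with |m''(x)| ≤ A·(1+|x|^p). Then |∫ m(y)·q(y) dy − m(M₁)| ≤ C·A·((1 + |M₁|^p)·M₂ᶜ + M_{2+p}^{|c|}), where M₂ᶜ = ∫(y−M₁)²q(y)dy, M_{2+p}^{|c|} = ∫|y−M₁|^{2+p}q(y)dy, and C depends only on p. -/
open Real MeasureTheory


lemma pow2bd (p : ℕ) {a b : ℝ} (ha : 0 ≤ a) (hb : 0 ≤ b) :
    (a + b) ^ p ≤ 2 ^ p * (a ^ p + b ^ p) := by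
  calc (a + b) ^ p ≤ (2 * max a b) ^ p := by
        apply pow_le_pow_left₀ (by positivity)
        rcases le_total a b with h | h
        · simp [max_eq_right h]; linarith
        · simp [max_eq_left h]; linarith
    _ = 2 ^ p * max a b ^ p := by rw [mul_pow]
    _ ≤ 2 ^ p * (a ^ p + b ^ p) := by
        gcongr
        rcases le_total a b with h | h
        · simp [max_eq_right h]; nlinarith [pow_nonneg ha p]
        · simp [max_eq_left h]; nlinarith [pow_nonneg hb p]

lemma taylor_bd (p : ℕ) (m : ℝ → ℝ) (A M₁ : ℝ) (hA : 0 < A) (hm : ContDiff ℝ 2 m)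
    (hb : ∀ x, |deriv (deriv m) x| ≤ A * (1 + |x| ^ p)) (y : ℝ) :
    |m y - m M₁ - deriv m M₁ * (y - M₁)| ≤
      A * (1 + 2 ^ p * |M₁| ^ p + 2 ^ p * |y - M₁| ^ p) * (y - M₁) ^ 2 := by
  set K : ℝ := A * (1 + 2 ^ p * |M₁| ^ p + 2 ^ p * |y - M₁| ^ p) with hK
  have hm1 : ContDiff ℝ 1 (deriv m) := by
    have := (contDiff_succ_iff_deriv (n := 1)).mp (by exact_mod_cast hm)
    exact this.2.2
  have hdm : Differentiable ℝ m := hm.differentiable (by norm_num)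
  have hdm' : Differentiable ℝ (deriv m) := hm1.differentiable (by norm_num)
  -- bound on second deriv over uIcc
  have hKb : ∀ x ∈ Set.uIcc M₁ y, ‖deriv (deriv m) x‖ ≤ K := by
    intro x hx
    have hxd : |x - M₁| ≤ |y - M₁| := by
      rw [Set.mem_uIcc] at hx
      rw [abs_le]
      rcases hx with ⟨h1, h2⟩ | ⟨h1, h2⟩ <;>
        constructor <;> nlinarith [le_abs_self (y - M₁), neg_abs_le (y - M₁)]
    have hxabs : |x| ≤ |M₁| + |y - M₁| := by
      calc |x| = |M₁ + (x - M₁)| := by ring_nf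
        _ ≤ |M₁| + |x - M₁| := abs_add_le _ _
        _ ≤ |M₁| + |y - M₁| := by linarith
    have hpow : |x| ^ p ≤ 2 ^ p * (|M₁| ^ p + |y - M₁| ^ p) := by
      calc |x| ^ p ≤ (|M₁| + |y - M₁|) ^ p := pow_le_pow_left₀ (abs_nonneg _) hxabs p
        _ ≤ 2 ^ p * (|M₁| ^ p + |y - M₁| ^ p) := pow2bd p (abs_nonneg _) (abs_nonneg _)
    calc ‖deriv (deriv m) x‖ = |deriv (deriv m) x| := rfl
      _ ≤ A * (1 + |x| ^ p) := hb x
      _ ≤ K := by rw [hK]; nlinarith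
  have hconv : Convex ℝ (Set.uIcc M₁ y) := convex_uIcc _ _
  -- first MVT: deriv m
  have h1 : ∀ x ∈ Set.uIcc M₁ y, ‖deriv m x - deriv m M₁‖ ≤ K * |y - M₁| := by
    intro x hx
    have := hconv.norm_image_sub_le_of_norm_hasDerivWithin_le
      (f := deriv m) (f' := deriv (deriv m))
      (fun z hz => ((hdm' z).hasDerivAt).hasDerivWithinAt) hKb Set.left_mem_uIcc hx
    have hxd : |x - M₁| ≤ |y - M₁| := by
      rw [Set.mem_uIcc] at hx
      rw [abs_le]
      rcases hx with ⟨h1, h2⟩ | ⟨h1, h2⟩ <;>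
        constructor <;> nlinarith [le_abs_self (y - M₁), neg_abs_le (y - M₁)]
    have hK0 : 0 ≤ K := by positivity
    calc ‖deriv m x - deriv m M₁‖ ≤ K * ‖x - M₁‖ := this
      _ = K * |x - M₁| := rfl
      _ ≤ K * |y - M₁| := by nlinarith
  -- second MVT: g = m - linear
  set g : ℝ → ℝ := fun x => m x - m M₁ - deriv m M₁ * (x - M₁) with hg
  have hgd : ∀ x, HasDerivAt g (deriv m x - deriv m M₁) x := by
    intro x
    have h := ((hdm x).hasDerivAt).sub_const (m M₁)
    have h2 : HasDerivAt (fun x : ℝ => deriv m M₁ * (x - M₁)) (deriv m M₁) x := by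
      simpa using ((hasDerivAt_id x).sub_const M₁).const_mul (deriv m M₁)
    exact h.sub h2
  have h2 := hconv.norm_image_sub_le_of_norm_hasDerivWithin_le
    (f := g) (f' := fun x => deriv m x - deriv m M₁)
    (fun z hz => (hgd z).hasDerivWithinAt) h1 Set.left_mem_uIcc Set.right_mem_uIcc
  have hgM : g M₁ = 0 := by simp [hg]
  have : |g y| ≤ K * |y - M₁| * |y - M₁| := by
    simpa [hgM] using h2
  calc |m y - m M₁ - deriv m M₁ * (y - M₁)| = |g y| := rfl
    _ ≤ K * |y - M₁| * |y - M₁| := this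
    _ = K * (y - M₁) ^ 2 := by rw [mul_assoc, ← abs_mul, abs_mul_self]; ring_nf


/-- Taylor estimate for the mean mortality: for a probability density `q` with mean `M₁`
and `m ∈ C²` with `|m''| ≤ A (1 + |x|^p)`,
`|∫ m q − m(M₁)| ≤ C A ((1+|M₁|^p) M₂ᶜ + M_{2+p}^{|c|})` with `C = C(p)`. -/
theorem stmt17 (p : ℕ) :
    ∃ C > 0, ∀ (q m : ℝ → ℝ) (A M₁ : ℝ), 0 < A →
      (∀ x, 0 ≤ q x) → Measurable q → (∫ x, q x) = 1 →
      Integrable (fun x => x * q x) → M₁ = ∫ x, x * q x →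
      ContDiff ℝ 2 m →
      (∀ x : ℝ, |deriv (deriv m) x| ≤ A * (1 + |x| ^ p)) →
      Integrable (fun y => m y * q y) →
      Integrable (fun y => (y - M₁) ^ 2 * q y) →
      Integrable (fun y => |y - M₁| ^ (2 + p) * q y) →
      |(∫ y, m y * q y) - m M₁|
        ≤ C * A * ((1 + |M₁| ^ p) * (∫ y, (y - M₁) ^ 2 * q y)
            + ∫ y, |y - M₁| ^ (2 + p) * q y) := by
  refine ⟨2 ^ p, by positivity, ?_⟩
  intro q m A M₁ hA hq0 hqm hq1 hxq hM hm hb hmq h2q hpq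
  -- q is integrable
  have hq_int : Integrable q := by
    by_contra h
    rw [integral_undef h] at hq1; norm_num at hq1
  have hlin : Integrable (fun y => (y - M₁) * q y) := by
    have h : Integrable (fun y => y * q y - M₁ * q y) := hxq.sub (hq_int.const_mul M₁)
    refine h.congr ?_
    filter_upwards with y; ring
  have hlin0 : (∫ y, (y - M₁) * q y) = 0 := by
    have hMq : Integrable (fun y => M₁ * q y) := hq_int.const_mul M₁
    have h1 : (∫ y, (y - M₁) * q y) = (∫ y, y * q y) - M₁ * ∫ y, q y := by
      rw [← integral_const_mul, ← integral_sub hxq hMq]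
      congr 1; funext y; ring
    rw [h1, hq1, ← hM]; ring
  set R : ℝ → ℝ := fun y => m y - m M₁ - deriv m M₁ * (y - M₁) with hR
  have hI1 : Integrable (fun y => m y * q y - m M₁ * q y) := hmq.sub (hq_int.const_mul (m M₁))
  have hI2 : Integrable (fun y => deriv m M₁ * ((y - M₁) * q y)) := hlin.const_mul (deriv m M₁)
  have hRq_int : Integrable (fun y => R y * q y) := by
    have h : Integrable (fun y => (m y * q y - m M₁ * q y) - deriv m M₁ * ((y - M₁) * q y)) :=
      hI1.sub hI2
    refine h.congr ?_
    filter_upwards with y; simp only [hR]; ring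
  have hRint : (∫ y, R y * q y) = (∫ y, m y * q y) - m M₁ := by
    have : (∫ y, R y * q y)
        = ∫ y, m y * q y - m M₁ * q y - deriv m M₁ * ((y - M₁) * q y) := by
      congr 1; funext y; simp only [hR]; ring
    have hmM : Integrable (fun y => m M₁ * q y) := hq_int.const_mul (m M₁)
    rw [this, integral_sub hI1 hI2, integral_sub hmq hmM, integral_const_mul, integral_const_mul,
      hq1, hlin0]
    ring
  -- the dominating function
  set B : ℝ → ℝ := fun y => 2 ^ p * A * ((1 + |M₁| ^ p) * ((y - M₁) ^ 2 * q y)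
      + |y - M₁| ^ (2 + p) * q y) with hB
  have hB_int : Integrable B := ((h2q.const_mul _).add hpq).const_mul _
  have hptwise : ∀ y, |R y * q y| ≤ B y := by
    intro y
    have htb := taylor_bd p m A M₁ hA hm hb y
    have hq0y := hq0 y
    have key : |R y| ≤ 2 ^ p * A * ((1 + |M₁| ^ p) * (y - M₁) ^ 2 + |y - M₁| ^ (2 + p)) := by
      refine htb.trans ?_
      have hd2 : (y - M₁) ^ 2 = |y - M₁| ^ 2 := (sq_abs _).symm
      have hsplit : |y - M₁| ^ (2 + p) = |y - M₁| ^ 2 * |y - M₁| ^ p := pow_add _ 2 p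
      have h1 : (1 : ℝ) ≤ 2 ^ p := by
        calc (1 : ℝ) = 1 ^ p := (one_pow p).symm
          _ ≤ 2 ^ p := pow_le_pow_left₀ (by norm_num) (by norm_num) p
      rw [hsplit, ← hd2]
      nlinarith [mul_nonneg (mul_nonneg (sub_nonneg.mpr h1) hA.le) (sq_nonneg (y - M₁)),
        pow_nonneg (abs_nonneg (y - M₁)) p, pow_nonneg (abs_nonneg M₁) p, sq_nonneg (y - M₁)]
    calc |R y * q y| = |R y| * q y := by rw [abs_mul, abs_of_nonneg hq0y]
      _ ≤ (2 ^ p * A * ((1 + |M₁| ^ p) * (y - M₁) ^ 2 + |y - M₁| ^ (2 + p))) * q y := by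
          apply mul_le_mul_of_nonneg_right key hq0y
      _ = B y := by simp only [hB]; ring
  calc |(∫ y, m y * q y) - m M₁| = |∫ y, R y * q y| := by rw [hRint]
    _ ≤ ∫ y, |R y * q y| := by
        simpa [Real.norm_eq_abs, abs_mul] using
          norm_integral_le_integral_norm (fun y => R y * q y)
    _ ≤ ∫ y, B y := integral_mono hRq_int.abs hB_int hptwise
    _ = 2 ^ p * A * ((1 + |M₁| ^ p) * (∫ y, (y - M₁) ^ 2 * q y)
            + ∫ y, |y - M₁| ^ (2 + p) * q y) := by
        simp only [hB]
        rw [integral_const_mul, integral_add (h2q.const_mul _) hpq, integral_const_mul]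
end
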